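/- Let C ⊂ ℝ^d be an open cone with vertex at the origin that is invariant under translations in the direction e_d (i.e. C + t e_d = C for all t ∈ ℝ). Suppose every positive harmonic function on C vanishing continuously on ∂C is homogeneous of the same fixed degree p > 0. Then every such positive harmonic function h on C with zero boundary values satisfies h(x + a e_d) = h(x) for all x ∈ C and a ∈ ℝ, i.e. h is independent of the last coordinate. -/

import Mathlib

open Metric
open Filter
open scoped Pointwise Topology

lemma my_fderiv_shift {E F : Type*} [NormedAddCommGroup E] [NormedSpace ℝ E]
    [NormedAddCommGroup F] [NormedSpace ℝ F] (f : E → F) (c x : E) :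
    fderiv ℝ (fun y => f (y + c)) x = fderiv ℝ f (x + c) := by
  by_cases hf : DifferentiableAt ℝ f (x + c)
  · have hg : HasFDerivAt (fun y : E => y + c) (ContinuousLinearMap.id ℝ E) x :=
      (hasFDerivAt_id x).add_const c
    have := (hf.hasFDerivAt.comp x hg).fderiv
    simpa [Function.comp_def] using this
  · rw [fderiv_zero_of_not_differentiableAt hf, fderiv_zero_of_not_differentiableAt]
    intro hd
    apply hf
    have hg : DifferentiableAt ℝ (fun y : E => y + (-c)) (x + c) :=
      (differentiable_id.add_const _).differentiableAt
    have hd' : DifferentiableAt ℝ (fun y => f (y + c)) (x + c + -c) := by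
      simpa [add_assoc] using hd
    have h2 := hd'.comp (x + c) hg
    have : (fun y : E => f ((y + -c) + c)) = f := by
      funext y; simp [add_assoc]
    simpa [Function.comp_def, this, add_assoc] using h2

/-- `HarmOn h s`: h is C² on s and satisfies Laplace's equation Δh = 0 on s. -/
def HarmOn {d : ℕ} (h : EuclideanSpace ℝ (Fin d) → ℝ)
    (s : Set (EuclideanSpace ℝ (Fin d))) : Prop :=
  ContDiffOn ℝ 2 h s ∧ ∀ x ∈ s,
    ∑ i : Fin d, fderiv ℝ (fun y => fderiv ℝ h y (EuclideanSpace.single i 1)) x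
      (EuclideanSpace.single i 1) = 0

/-- If every positive harmonic function on a cylindrical cone C (invariant under
translations in the direction e_d), vanishing on ∂C, is homogeneous of the same fixed
degree p > 0, then every such function is independent of the last coordinate. -/
theorem stmt10 (d : ℕ) (hd : 2 ≤ d) (C : Set (EuclideanSpace ℝ (Fin d)))
    (hCo : IsOpen C) (hCne : C.Nonempty)
    (hcone : ∀ l : ℝ, 0 < l → l • C = C)
    (e : EuclideanSpace ℝ (Fin d)) (he : e = EuclideanSpace.single (⟨d - 1, by omega⟩ : Fin d) 1)
    (hcyl : ∀ t : ℝ, (fun x => x + t • e) '' C = C)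
    (p : ℝ) (hp : 0 < p)
    (hhom : ∀ h : EuclideanSpace ℝ (Fin d) → ℝ,
      HarmOn h C → (∀ x ∈ C, 0 < h x) → ContinuousOn h (closure C) →
      (∀ x ∈ frontier C \ {0}, h x = 0) →
      ∀ l : ℝ, 0 < l → ∀ x ∈ C, h (l • x) = l ^ p * h x) :
    ∀ h : EuclideanSpace ℝ (Fin d) → ℝ,
      HarmOn h C → (∀ x ∈ C, 0 < h x) → ContinuousOn h (closure C) →
      (∀ x ∈ frontier C \ {0}, h x = 0) →
      ∀ x ∈ C, ∀ a : ℝ, h (x + a • e) = h x := by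
  -- translation invariance of C, closure C, frontier C
  have hmemC : ∀ x ∈ C, ∀ t : ℝ, x + t • e ∈ C := by
    intro x hx t
    rw [← hcyl t]
    exact ⟨x, hx, rfl⟩
  have hclos : ∀ x ∈ closure C, ∀ t : ℝ, x + t • e ∈ closure C := by
    intro x hx t
    have hcont : Continuous fun y : EuclideanSpace ℝ (Fin d) => y + t • e :=
      continuous_id.add continuous_const
    have h1 : x + t • e ∈ (fun y => y + t • e) '' closure C := ⟨x, hx, rfl⟩
    have h2 := image_closure_subset_closure_image (s := C) hcont h1
    rwa [hcyl t] at h2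
  have hfr : ∀ x ∈ frontier C, ∀ t : ℝ, x + t • e ∈ frontier C := by
    intro x hx t
    rw [hCo.frontier_eq] at hx ⊢
    refine ⟨hclos x hx.1 t, fun hmem => hx.2 ?_⟩
    have := hmemC _ hmem (-t)
    simpa [add_assoc] using this
  intro h hharm hpos hcont hbd x hx a
  have hhomh := hhom h hharm hpos hcont hbd
  -- h 0 = 0
  obtain ⟨y, hy⟩ := hCne
  have hyC : ∀ l : ℝ, 0 < l → l • y ∈ C := by
    intro l hl
    rw [← hcone l hl]
    exact Set.smul_mem_smul_set hy
  have t1 : Tendsto (fun l : ℝ => l • y) (𝓝[>] 0) (𝓝 0) := by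
    have : Tendsto (fun l : ℝ => l • y) (𝓝 0) (𝓝 ((0:ℝ) • y)) :=
      (continuous_id.smul continuous_const).tendsto 0
    rw [zero_smul] at this
    exact this.mono_left nhdsWithin_le_nhds
  have hmemev : ∀ᶠ l : ℝ in 𝓝[>] 0, l • y ∈ C := by
    filter_upwards [self_mem_nhdsWithin] with l hl
    exact hyC l hl
  have h0closure : (0 : EuclideanSpace ℝ (Fin d)) ∈ closure C :=
    mem_closure_of_tendsto t1 hmemev
  have t2 : Tendsto (fun l : ℝ => l • y) (𝓝[>] 0) (𝓝[closure C] 0) :=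
    tendsto_nhdsWithin_of_tendsto_nhds_of_eventually_within _ t1
      (hmemev.mono fun l hl => subset_closure hl)
  have t3 : Tendsto (fun l : ℝ => h (l • y)) (𝓝[>] 0) (𝓝 (h 0)) :=
    (hcont 0 h0closure).tendsto.comp t2
  have t4 : Tendsto (fun l : ℝ => h (l • y)) (𝓝[>] 0) (𝓝 0) := by
    have hc : Tendsto (fun l : ℝ => l ^ p * h y) (𝓝[>] 0) (𝓝 0) := by
      have := (Real.continuousAt_rpow_const 0 p (Or.inr hp.le)).tendsto
      rw [Real.zero_rpow hp.ne'] at this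
      have t5 : Tendsto (fun l : ℝ => l ^ p) (𝓝[>] (0:ℝ)) (𝓝 0) :=
        this.mono_left nhdsWithin_le_nhds
      simpa using t5.mul_const (h y)
    refine hc.congr' ?_
    filter_upwards [self_mem_nhdsWithin] with l hl
    exact (hhomh l hl y hy).symm
  have h0 : h 0 = 0 := tendsto_nhds_unique t3 t4
  -- the translated function
  set h1 : EuclideanSpace ℝ (Fin d) → ℝ := fun z => h (z + a • e) with hh1
  have hharm1 : HarmOn h1 C := by
    constructor
    · have hmap : Set.MapsTo (fun z : EuclideanSpace ℝ (Fin d) => z + a • e) C C :=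
        fun z hz => hmemC z hz a
      exact hharm.1.comp ((contDiff_id.add contDiff_const).contDiffOn) hmap
    · intro z hz
      have key : ∀ i : Fin d,
          fderiv ℝ (fun w => fderiv ℝ h1 w (EuclideanSpace.single i 1)) z
            (EuclideanSpace.single i 1)
          = fderiv ℝ (fun w => fderiv ℝ h w (EuclideanSpace.single i 1)) (z + a • e)
            (EuclideanSpace.single i 1) := by
        intro i
        have e1 : (fun w => fderiv ℝ h1 w (EuclideanSpace.single i 1))
            = fun w => (fun u => fderiv ℝ h u (EuclideanSpace.single i 1)) (w + a • e) := by
          funext w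
          rw [hh1, my_fderiv_shift h (a • e) w]
        rw [e1, my_fderiv_shift (fun u => fderiv ℝ h u (EuclideanSpace.single i 1)) (a • e) z]
      simp_rw [key]
      exact hharm.2 (z + a • e) (hmemC z hz a)
  have hpos1 : ∀ z ∈ C, 0 < h1 z := fun z hz => hpos _ (hmemC z hz a)
  have hcont1 : ContinuousOn h1 (closure C) := by
    have : ContinuousOn (fun z : EuclideanSpace ℝ (Fin d) => z + a • e) (closure C) :=
      (continuous_id.add continuous_const).continuousOn
    exact hcont.comp this fun z hz => hclos z hz a
  have hbd1 : ∀ z ∈ frontier C \ {0}, h1 z = 0 := by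
    intro z hz
    have hzf : z + a • e ∈ frontier C := hfr z hz.1 a
    by_cases hz0 : z + a • e = 0
    · rw [hh1]; simp only []; rw [hz0]; exact h0
    · exact hbd (z + a • e) ⟨hzf, hz0⟩
  have hhomh1 := hhom h1 hharm1 hpos1 hcont1 hbd1
  -- key identity
  have key : ∀ l : ℝ, 0 < l → h (x + a • e) = h (x + (a / l) • e) := by
    intro l hl
    have e1 : l • (x + (a / l) • e) = l • x + a • e := by
      rw [smul_add, smul_smul, mul_div_cancel₀ a hl.ne']
    have h2 : h1 (l • x) = l ^ p * h1 x := hhomh1 l hl x hx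
    have h3 : h (l • (x + (a / l) • e)) = l ^ p * h (x + (a / l) • e) :=
      hhomh l hl _ (hmemC x hx (a / l))
    rw [e1] at h3
    have h4 : h1 (l • x) = h (l • x + a • e) := rfl
    have hlp : (0:ℝ) < l ^ p := Real.rpow_pos_of_pos hl p
    have : l ^ p * h1 x = l ^ p * h (x + (a / l) • e) := by rw [← h2, h4, h3]
    exact mul_left_cancel₀ hlp.ne' this
  -- limit as l → ∞
  have hca : ContinuousAt h x := hharm.1.continuousOn.continuousAt (hCo.mem_nhds hx)
  have tin : Tendsto (fun l : ℝ => x + (a / l) • e) atTop (𝓝 x) := by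
    have hdiv : Tendsto (fun l : ℝ => a / l) atTop (𝓝 0) :=
      Tendsto.div_atTop tendsto_const_nhds tendsto_id
    have := (hdiv.smul_const e).const_add x
    simpa using this
  have tlim : Tendsto (fun l : ℝ => h (x + (a / l) • e)) atTop (𝓝 (h x)) :=
    hca.tendsto.comp tin
  have tconst : Tendsto (fun _ : ℝ => h (x + a • e)) atTop (𝓝 (h x)) := by
    refine tlim.congr' ?_
    filter_upwards [eventually_gt_atTop (0:ℝ)] with l hl
    exact (key l hl).symm
  exact tendsto_nhds_unique tendsto_const_nhds tconst
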